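/- After pivoting along the edge uv, the neighborhoods of u and v are swapped on the rest of the graph: for any vertex w distinct from u and v, w is adjacent to u in G ∧ uv if and only if w is adjacent to v in G, and w is adjacent to v in G ∧ uv if and only if w is adjacent to u in G; moreover u and v remain adjacent. -/

import Mathlib

/-- Local complementation of `G` at `u`: adjacency between two distinct common
neighbors of `u` is toggled; all other adjacencies are unchanged. -/
def localComp {V : Type*} (G : SimpleGraph V) (u : V) : SimpleGraph V where
  Adj v w := v ≠ w ∧ Xor' (G.Adj v w) (G.Adj u v ∧ G.Adj u w)
  symm := by
    constructor
    intro v w h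
    refine ⟨h.1.symm, ?_⟩
    rcases h.2 with ⟨ha, hb⟩ | ⟨ha, hb⟩
    · exact Or.inl ⟨G.adj_symm ha, fun hc => hb ⟨hc.2, hc.1⟩⟩
    · exact Or.inr ⟨⟨ha.2, ha.1⟩, fun hc => hb (G.adj_symm hc)⟩
  loopless := ⟨fun v h => h.1 rfl⟩

/-- The pivot of `G` along the edge `uv`: `G ∧ uv = G ⋆ u ⋆ v ⋆ u`. -/
def pivot {V : Type*} (G : SimpleGraph V) (u v : V) : SimpleGraph V :=
  localComp (localComp (localComp G u) v) u

lemma localComp_adj {V : Type*} (G : SimpleGraph V) (u v w : V) :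
    (localComp G u).Adj v w ↔ v ≠ w ∧ Xor' (G.Adj v w) (G.Adj u v ∧ G.Adj u w) := Iff.rfl

lemma pivot_adj {V : Type*} (G : SimpleGraph V) (u v a b : V) :
    (pivot G u v).Adj a b ↔ a ≠ b ∧ Xor' ((localComp (localComp G u) v).Adj a b)
      ((localComp (localComp G u) v).Adj u a ∧ (localComp (localComp G u) v).Adj u b) :=
  Iff.rfl

/-- After pivoting along `uv`, the neighborhoods of `u` and `v` are swapped on the
rest of the graph, and `u` and `v` remain adjacent. -/
theorem pivot_swaps_neighborhoods {V : Type*} (G : SimpleGraph V) (u v : V)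
    (h : G.Adj u v) :
    (∀ w : V, w ≠ u → w ≠ v →
        (((pivot G u v).Adj u w ↔ G.Adj v w) ∧ ((pivot G u v).Adj v w ↔ G.Adj u w))) ∧
    (pivot G u v).Adj u v := by
  have huv : u ≠ v := h.ne
  have hl : ¬ G.Adj u u := G.loopless.irrefl u
  have hl' : ¬ G.Adj v v := G.loopless.irrefl v
  have hvu : G.Adj v u := h.symm
  have hvu2 : v ≠ u := fun e => huv e.symm
  have huw' : ¬ G.Adj u u := G.loopless.irrefl u
  constructor
  · intro w hwu hwv
    have h1 : u ≠ w := fun e => hwu e.symm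
    have h2 : v ≠ w := fun e => hwv e.symm
    constructor
    · simp only [pivot_adj, localComp_adj, Xor', ne_eq]
      by_cases hA : G.Adj u w <;> by_cases hB : G.Adj v w <;>
        simp_all
    · simp only [pivot_adj, localComp_adj, Xor', ne_eq]
      by_cases hA : G.Adj u w <;> by_cases hB : G.Adj v w <;>
        simp_all
  · simp only [pivot_adj, localComp_adj, Xor', ne_eq]
    simp_all
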